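/- Fix an integer n ≥ 1 and δ ∈ (0,1). For α ∈ (0,1) and θ > −α, let U_1,…,U_n be independent with U_i distributed Beta(1−α, θ+iα). Then limsup of b(α,θ) · log P(∏_{i=1}^n (1−U_i) ≥ δ) is at most −n, where the limsup is taken as a(α,θ) → 0 over pairs (α,θ) with α ∈ (0,1) and θ + α > 0. -/

import Mathlib

open MeasureTheory Filter Set

/-- The Beta distribution on `ℝ` with parameters `a, b`: the measure with density
`x^(a-1) * (1-x)^(b-1) / (Γ(a)Γ(b)/Γ(a+b))` on `(0,1)` with respect to Lebesgue measure. -/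
noncomputable def betaMeasure (a b : ℝ) : Measure ℝ :=
  volume.withDensity fun x =>
    ENNReal.ofReal (Set.indicator (Set.Ioo (0:ℝ) 1)
      (fun x => x ^ (a - 1) * (1 - x) ^ (b - 1) /
        (Real.Gamma a * Real.Gamma b / Real.Gamma (a + b))) x)

/-- `a(α,θ) = max(α, |θ|)`. -/
noncomputable def aParam (α θ : ℝ) : ℝ := max α |θ|

/-- `b(α,θ) = (-log a(α,θ))⁻¹`. -/
noncomputable def bParam (α θ : ℝ) : ℝ := (-Real.log (aParam α θ))⁻¹

/-- The filter describing `a(α,θ) → 0` over pairs `(α,θ)` with `α ∈ (0,1)` and `θ + α > 0`. -/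
noncomputable def smallParamFilter : Filter (ℝ × ℝ) :=
  (Filter.comap (fun p : ℝ × ℝ => aParam p.1 p.2) (nhdsWithin 0 (Set.Ioi 0))) ⊓
    Filter.principal {p : ℝ × ℝ | p.1 ∈ Set.Ioo (0:ℝ) 1 ∧ 0 < p.1 + p.2}

/-- The probability `P(∏_{i=1}^n (1-U_i) ≥ δ)`, where `U_1, …, U_n` are independent with
`U_i ~ Beta(1-α, θ+iα)`, expressed via the product of the Beta laws. -/
noncomputable def prodTailProb (α θ : ℝ) (n : ℕ) (δ : ℝ) : ℝ :=
  ((Measure.pi fun i : Fin n => betaMeasure (1 - α) (θ + ((i : ℕ) + 1) * α))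
    {x : Fin n → ℝ | δ ≤ ∏ i : Fin n, (1 - x i)}).toReal


lemma gammaLB {s : ℝ} (h0 : 0 < s) (h2 : s ≤ 2) : Real.exp (-2) / 2 ≤ Real.Gamma s := by
  rw [Real.Gamma_eq_integral h0]
  have hint : IntegrableOn (fun x : ℝ => Real.exp (-x) * x ^ (s - 1)) (Ioi 0) :=
    Real.GammaIntegral_convergent h0
  have hsub : Ioc (1:ℝ) 2 ⊆ Ioi 0 := fun x hx => lt_trans one_pos hx.1
  have h1 : ∫ x in Ioc (1:ℝ) 2, Real.exp (-x) * x ^ (s - 1) ≤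
      ∫ x in Ioi (0:ℝ), Real.exp (-x) * x ^ (s - 1) := by
    apply setIntegral_mono_set hint
    · filter_upwards [ae_restrict_mem measurableSet_Ioi] with x hx
      have : (0:ℝ) < x := hx
      positivity
    · exact HasSubset.Subset.eventuallyLE hsub
  refine le_trans ?_ h1
  have h2' : ∫ x in Ioc (1:ℝ) 2, (Real.exp (-2) * (1/2) : ℝ) ≤
      ∫ x in Ioc (1:ℝ) 2, Real.exp (-x) * x ^ (s - 1) := by
    apply setIntegral_mono_on
    · exact integrableOn_const (by simp)
    · exact hint.mono_set hsub
    · exact measurableSet_Ioc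
    · intro x hx
      have hx1 : (1:ℝ) ≤ x := hx.1.le
      have hx2 : x ≤ 2 := hx.2
      have he : Real.exp (-2) ≤ Real.exp (-x) := Real.exp_le_exp.2 (by linarith)
      have hp : (1/2 : ℝ) ≤ x ^ (s - 1) := by
        rcases le_or_gt 1 s with hs | hs
        · have : (1:ℝ) = (1:ℝ) ^ (s-1) := (Real.one_rpow _).symm
          have h1x : (1:ℝ) ^ (s-1) ≤ x ^ (s-1) :=
            Real.rpow_le_rpow zero_le_one hx1 (by linarith)
          rw [Real.one_rpow] at h1x; linarith
        · have hb : x ^ (s-1) ≥ (2:ℝ) ^ (s-1) :=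
            Real.rpow_le_rpow_of_nonpos (by linarith) hx2 (by linarith)
          have : (2:ℝ) ^ (-1 : ℝ) ≤ (2:ℝ) ^ (s-1) :=
            Real.rpow_le_rpow_of_exponent_le one_le_two (by linarith)
          rw [Real.rpow_neg_one] at this
          norm_num at this ⊢
          linarith
      calc Real.exp (-2) * (1/2) ≤ Real.exp (-x) * (1/2) := by nlinarith [Real.exp_pos (-2)]
        _ ≤ Real.exp (-x) * x ^ (s-1) := by nlinarith [Real.exp_pos (-x)]
  refine le_trans ?_ h2'
  rw [setIntegral_const]
  simp [Real.volume_Ioc]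
  norm_num
  linarith [Real.exp_pos (-2:ℝ)]

lemma gammaUB {s : ℝ} (h0 : 1/2 ≤ s) (h2 : s ≤ 2) : Real.Gamma s ≤ 2 := by
  have hseg : s ∈ segment ℝ (1/2 : ℝ) 2 := by
    rw [segment_eq_Icc (by norm_num)]; exact ⟨h0, h2⟩
  have := Real.convexOn_Gamma.le_on_segment (by norm_num : (1/2:ℝ) ∈ Ioi 0)
    (by norm_num : (2:ℝ) ∈ Ioi 0) hseg
  refine this.trans ?_
  have hpi : Real.Gamma (1/2) = Real.sqrt Real.pi := Real.Gamma_one_half_eq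
  have : Real.sqrt Real.pi ≤ 2 := by
    rw [show (2:ℝ) = Real.sqrt 4 by rw [show (4:ℝ) = 2^2 by norm_num, Real.sqrt_sq]; norm_num]
    exact Real.sqrt_le_sqrt Real.pi_le_four
  rw [hpi, Real.Gamma_two]
  exact max_le this one_le_two
lemma beta_upper {α b δ : ℝ} (hα0 : 0 < α) (hα : α ≤ 1/2) (hb0 : 0 < b) (hb1 : b ≤ 1)
    (hδ0 : 0 < δ) (hδ1 : δ < 1) :
    betaMeasure (1 - α) b (Ioc 0 (1 - δ)) ≤ ENNReal.ofReal (16 * Real.exp 4 * b / δ) := by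
  set g : ℝ := Real.exp (-2) / 2 with hgdef
  have hg : 0 < g := by positivity
  set B : ℝ := Real.Gamma (1 - α) * Real.Gamma b / Real.Gamma (1 - α + b) with hBdef
  have hΓ1 : g ≤ Real.Gamma (1 - α) := gammaLB (by linarith) (by linarith)
  have hΓb : g / b ≤ Real.Gamma b := by
    have h1 : g ≤ Real.Gamma (b + 1) := gammaLB (by linarith) (by linarith)
    rw [Real.Gamma_add_one (ne_of_gt hb0)] at h1
    rw [div_le_iff₀ hb0]; linarith [mul_comm b (Real.Gamma b)]
  have hΓ2 : Real.Gamma (1 - α + b) ≤ 2 := gammaUB (by linarith) (by linarith)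
  have hΓbpos : 0 < Real.Gamma b := Real.Gamma_pos_of_pos hb0
  have hΓ1pos : 0 < Real.Gamma (1 - α) := Real.Gamma_pos_of_pos (by linarith)
  have hΓ2pos : 0 < Real.Gamma (1 - α + b) := Real.Gamma_pos_of_pos (by linarith)
  have hB : 0 < B := by positivity
  -- inverse of B bounded
  have hBinv : B⁻¹ ≤ 8 * Real.exp 4 * b := by
    have hden : g * (g / b) ≤ Real.Gamma (1 - α) * Real.Gamma b :=
      mul_le_mul hΓ1 hΓb (by positivity) (by linarith)
    have hquot : B⁻¹ = Real.Gamma (1 - α + b) / (Real.Gamma (1 - α) * Real.Gamma b) := by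
      rw [hBdef]; field_simp
    rw [hquot]
    have h2 : Real.Gamma (1 - α + b) / (Real.Gamma (1 - α) * Real.Gamma b)
        ≤ 2 / (g * (g / b)) := by
      apply div_le_div₀ (by norm_num) hΓ2 (by positivity) hden
    refine h2.trans ?_
    have hgg : g * (g / b) = Real.exp (-4) / (4 * b) := by
      rw [hgdef, div_div, div_mul_div_comm, ← Real.exp_add]
      norm_num
      ring_nf
    rw [hgg]
    rw [div_div_eq_mul_div, div_le_iff₀ (by positivity)]
    have he : Real.exp (-4) * Real.exp 4 = 1 := by rw [← Real.exp_add]; norm_num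
    nlinarith [Real.exp_pos (4:ℝ), Real.exp_pos (-4:ℝ), hb0]
  have ht0 : (0:ℝ) < 1 - δ := by linarith
  -- the lintegral bound
  rw [betaMeasure, withDensity_apply _ measurableSet_Ioc]
  have step1 : ∫⁻ x in Ioc (0:ℝ) (1 - δ),
      ENNReal.ofReal (Set.indicator (Set.Ioo (0:ℝ) 1)
        (fun x => x ^ (1 - α - 1) * (1 - x) ^ (b - 1) /
          (Real.Gamma (1-α) * Real.Gamma b / Real.Gamma (1 - α + b))) x)
      ≤ ∫⁻ x in Ioc (0:ℝ) (1 - δ), ENNReal.ofReal (x ^ (-α) * (δ⁻¹ * B⁻¹)) := by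
    apply setLIntegral_mono' measurableSet_Ioc
    intro x hx
    have hx0 : 0 < x := hx.1
    have hx2 : x ≤ 1 - δ := hx.2
    have hx1 : x < 1 := lt_of_le_of_lt hx2 (by linarith)
    have hmem : x ∈ Set.Ioo (0:ℝ) 1 := ⟨hx0, hx1⟩
    rw [Set.indicator_of_mem hmem]
    apply ENNReal.ofReal_le_ofReal
    have hxa : x ^ (1 - α - 1) = x ^ (-α) := by norm_num
    rw [hxa, ← hBdef, div_eq_mul_inv, mul_assoc]
    apply mul_le_mul_of_nonneg_left ?_ (Real.rpow_nonneg hx0.le _)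
    apply mul_le_mul_of_nonneg_right ?_ (le_of_lt (inv_pos.2 hB))
    calc (1 - x) ^ (b - 1) ≤ δ ^ (b - 1) :=
          Real.rpow_le_rpow_of_nonpos hδ0 (by linarith) (by linarith)
      _ = δ ^ b * δ ^ (-1 : ℝ) := by
          rw [show b - 1 = b + (-1) by ring, Real.rpow_add hδ0]
      _ ≤ 1 * δ⁻¹ := by
          rw [Real.rpow_neg_one]
          exact mul_le_mul_of_nonneg_right
            (Real.rpow_le_one hδ0.le (by linarith) hb0.le) (by positivity)
      _ = δ⁻¹ := one_mul _
  refine le_trans step1 ?_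
  -- compute the remaining lintegral
  have hint : IntegrableOn (fun x : ℝ => x ^ (-α)) (Ioc 0 (1 - δ)) := by
    have := intervalIntegral.intervalIntegrable_rpow' (show (-1:ℝ) < -α by linarith)
      (a := 0) (b := 1 - δ)
    rwa [intervalIntegrable_iff_integrableOn_Ioc_of_le ht0.le] at this
  have hintc : IntegrableOn (fun x : ℝ => x ^ (-α) * (δ⁻¹ * B⁻¹)) (Ioc 0 (1 - δ)) :=
    hint.mul_const _
  have hnn : 0 ≤ᵐ[volume.restrict (Ioc (0:ℝ) (1 - δ))]
      (fun x : ℝ => x ^ (-α) * (δ⁻¹ * B⁻¹)) := by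
    filter_upwards [ae_restrict_mem measurableSet_Ioc] with x hx
    have : (0:ℝ) < x := hx.1
    positivity
  rw [← ofReal_integral_eq_lintegral_ofReal hintc hnn]
  apply ENNReal.ofReal_le_ofReal
  rw [MeasureTheory.integral_mul_const]
  have hval : ∫ x in Ioc (0:ℝ) (1 - δ), x ^ (-α) ≤ 2 := by
    rw [← intervalIntegral.integral_of_le ht0.le]
    rw [integral_rpow (Or.inl (by linarith))]
    rw [Real.zero_rpow (by intro h; rw [show -α + 1 = 1 - α by ring] at h; linarith)]
    have h1 : (1 - δ) ^ (-α + 1) ≤ 1 := Real.rpow_le_one ht0.le (by linarith) (by linarith)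
    rw [sub_zero, div_le_iff₀ (by linarith)]
    nlinarith
  have hc : 0 ≤ δ⁻¹ * B⁻¹ := by positivity
  calc (∫ x in Ioc (0:ℝ) (1 - δ), x ^ (-α)) * (δ⁻¹ * B⁻¹) ≤ 2 * (δ⁻¹ * B⁻¹) := by
        apply mul_le_mul_of_nonneg_right hval hc
    _ ≤ 2 * (δ⁻¹ * (8 * Real.exp 4 * b)) := by
        apply mul_le_mul_of_nonneg_left ?_ (by norm_num)
        exact mul_le_mul_of_nonneg_left hBinv (by positivity)
    _ = 16 * Real.exp 4 * b / δ := by field_simp; ring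

lemma beta_lower {α b c : ℝ} (hα0 : 0 < α) (hα1 : α < 1) (hb0 : 0 < b) (hb1 : b ≤ 1)
    (hc0 : 0 < c) (hc1 : c < 1) : 0 < betaMeasure (1 - α) b (Ioo 0 c) := by
  have hΓbpos : 0 < Real.Gamma b := Real.Gamma_pos_of_pos hb0
  have hΓ1pos : 0 < Real.Gamma (1 - α) := Real.Gamma_pos_of_pos (by linarith)
  have hΓ2pos : 0 < Real.Gamma (1 - α + b) := Real.Gamma_pos_of_pos (by linarith)
  set B : ℝ := Real.Gamma (1 - α) * Real.Gamma b / Real.Gamma (1 - α + b) with hBdef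
  have hB : 0 < B := by positivity
  rw [betaMeasure, withDensity_apply _ measurableSet_Ioo]
  have step : ∫⁻ _ in Ioo (0:ℝ) c, (ENNReal.ofReal B⁻¹) ≤
      ∫⁻ x in Ioo (0:ℝ) c, ENNReal.ofReal (Set.indicator (Set.Ioo (0:ℝ) 1)
        (fun x => x ^ (1 - α - 1) * (1 - x) ^ (b - 1) /
          (Real.Gamma (1-α) * Real.Gamma b / Real.Gamma (1 - α + b))) x) := by
    apply setLIntegral_mono' measurableSet_Ioo
    intro x hx
    have hx0 : 0 < x := hx.1
    have hx1 : x < 1 := lt_trans hx.2 hc1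
    have hmem : x ∈ Set.Ioo (0:ℝ) 1 := ⟨hx0, hx1⟩
    rw [Set.indicator_of_mem hmem]
    apply ENNReal.ofReal_le_ofReal
    have h1 : (1:ℝ) ≤ x ^ (1 - α - 1) := by
      rw [show (1 - α - 1 : ℝ) = -α by ring]
      exact Real.one_le_rpow_of_pos_of_le_one_of_nonpos hx0 hx1.le (by linarith)
    have h2 : (1:ℝ) ≤ (1 - x) ^ (b - 1) :=
      Real.one_le_rpow_of_pos_of_le_one_of_nonpos (by linarith) (by linarith) (by linarith)
    rw [← hBdef, div_eq_mul_inv]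
    have : (1:ℝ) ≤ x ^ (1 - α - 1) * (1 - x) ^ (b - 1) := by nlinarith
    nlinarith [inv_pos.2 hB]
  refine lt_of_lt_of_le ?_ step
  rw [setLIntegral_const, Real.volume_Ioo]
  have h1 : (0:ENNReal) < ENNReal.ofReal B⁻¹ := ENNReal.ofReal_pos.2 (by positivity)
  have h2 : (0:ENNReal) < ENNReal.ofReal (c - 0) := ENNReal.ofReal_pos.2 (by linarith)
  exact ENNReal.mul_pos h1.ne' h2.ne'

lemma beta_null (a b : ℝ) : betaMeasure a b (Set.Ioo (0:ℝ) 1)ᶜ = 0 := by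
  rw [betaMeasure, withDensity_apply _ measurableSet_Ioo.compl]
  apply le_antisymm _ (by simp)
  have : ∫⁻ x in (Set.Ioo (0:ℝ) 1)ᶜ, (0:ENNReal) = 0 := lintegral_zero
  rw [← this]
  apply setLIntegral_mono' measurableSet_Ioo.compl
  intro x hx
  rw [Set.indicator_of_notMem hx]
  simp

lemma prodTailProb_bounds (n : ℕ) (hn : 1 ≤ n) {δ α θ : ℝ} (hδ0 : 0 < δ) (hδ1 : δ < 1)
    (hα0 : 0 < α) (hα1 : α < 1) (hα2 : α ≤ 1/2) (hθα : 0 < α + θ)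
    (hsmall : ((n:ℝ)+1) * aParam α θ ≤ 1) :
    0 < prodTailProb α θ n δ ∧
    prodTailProb α θ n δ ≤ (16 * Real.exp 4 * ((n:ℝ)+1) / δ * aParam α θ) ^ n := by
  unfold prodTailProb
  have ha0 : 0 < aParam α θ := lt_of_lt_of_le hα0 (le_max_left _ _)
  have hαa : α ≤ aParam α θ := le_max_left _ _
  have hθa : |θ| ≤ aParam α θ := le_max_right _ _
  set a := aParam α θ
  set μ := fun i : Fin n => betaMeasure (1 - α) (θ + ((i : ℕ) + 1) * α) with hμ
  haveI hsf : ∀ i : Fin n, SigmaFinite (μ i) := fun i => by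
    rw [hμ]; unfold betaMeasure; infer_instance
  set Kδ : ℝ := 16 * Real.exp 4 * ((n:ℝ)+1) / δ with hKδ
  have hKδ0 : 0 < Kδ := by
    have := Real.exp_pos (4:ℝ); positivity
  -- per-coordinate parameter facts
  have hb : ∀ i : Fin n, 0 < θ + ((i : ℕ) + 1) * α ∧ θ + ((i : ℕ) + 1) * α ≤ 1 ∧
      θ + ((i : ℕ) + 1) * α ≤ ((n:ℝ)+1) * a := by
    intro i
    have h1 : (1:ℝ) ≤ ((i:ℕ):ℝ) + 1 := by
      have : (0:ℝ) ≤ ((i:ℕ):ℝ) := Nat.cast_nonneg _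
      linarith
    have h2 : ((i:ℕ):ℝ) + 1 ≤ (n:ℝ) := by exact_mod_cast Nat.succ_le_of_lt i.isLt
    have hθ1 : θ ≤ a := le_trans (le_abs_self θ) hθa
    have hb1 : θ + ((i : ℕ) + 1) * α ≤ ((n:ℝ)+1) * a := by nlinarith
    refine ⟨?_, le_trans hb1 hsmall, hb1⟩
    nlinarith
  set E := {x : Fin n → ℝ | δ ≤ ∏ i : Fin n, (1 - x i)} with hE
  -- Upper bound for the measure of E
  have hupper : Measure.pi μ E ≤ ENNReal.ofReal ((Kδ * a) ^ n) := by
    have hsub : E ⊆ (Set.pi univ fun _ : Fin n => Ioc (0:ℝ) (1-δ)) ∪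
        ⋃ i, Function.eval i ⁻¹' (Set.Ioo (0:ℝ) 1)ᶜ := by
      intro x hx
      by_cases hall : ∀ i, x i ∈ Set.Ioo (0:ℝ) 1
      · left
        intro i _
        have hprod : (1 - x i) * ∏ j ∈ Finset.univ.erase i, (1 - x j)
            = ∏ j : Fin n, (1 - x j) :=
          Finset.mul_prod_erase Finset.univ (fun j => 1 - x j) (Finset.mem_univ i)
        have ht1 : ∏ j ∈ Finset.univ.erase i, (1 - x j) ≤ 1 :=
          Finset.prod_le_one (fun j _ => by linarith [(hall j).2])
            (fun j _ => by linarith [(hall j).1])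
        have ht0 : (0:ℝ) ≤ ∏ j ∈ Finset.univ.erase i, (1 - x j) :=
          Finset.prod_nonneg (fun j _ => by linarith [(hall j).2])
        have hxi1 : (0:ℝ) ≤ 1 - x i := by linarith [(hall i).2]
        have hδx : δ ≤ 1 - x i := by
          have := hx
          rw [hE, Set.mem_setOf_eq] at this
          nlinarith
        exact ⟨(hall i).1, by linarith⟩
      · right
        push_neg at hall
        obtain ⟨i, hi⟩ := hall
        exact Set.mem_iUnion.2 ⟨i, hi⟩
    calc Measure.pi μ E
        ≤ Measure.pi μ ((Set.pi univ fun _ : Fin n => Ioc (0:ℝ) (1-δ)) ∪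
          ⋃ i, Function.eval i ⁻¹' (Set.Ioo (0:ℝ) 1)ᶜ) := measure_mono hsub
      _ ≤ Measure.pi μ (Set.pi univ fun _ : Fin n => Ioc (0:ℝ) (1-δ)) +
          Measure.pi μ (⋃ i, Function.eval i ⁻¹' (Set.Ioo (0:ℝ) 1)ᶜ) :=
          measure_union_le _ _
      _ = Measure.pi μ (Set.pi univ fun _ : Fin n => Ioc (0:ℝ) (1-δ)) := by
          have hnull : Measure.pi μ (⋃ i, Function.eval i ⁻¹'
              (Set.Ioo (0:ℝ) 1)ᶜ) = 0 :=
            measure_iUnion_null fun i =>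
              Measure.pi_eval_preimage_null (μ := μ) (i := i)
                (show μ i (Set.Ioo (0:ℝ) 1)ᶜ = 0 from beta_null _ _)
          rw [hnull, add_zero]
      _ = ∏ i : Fin n, μ i (Ioc (0:ℝ) (1-δ)) := Measure.pi_pi μ _
      _ ≤ ∏ _i : Fin n, ENNReal.ofReal (Kδ * a) := by
          apply Finset.prod_le_prod'
          intro i _
          refine le_trans (beta_upper hα0 hα2 (hb i).1 (hb i).2.1 hδ0 hδ1) ?_
          apply ENNReal.ofReal_le_ofReal
          rw [hKδ]
          calc 16 * Real.exp 4 * (θ + ((i : ℕ) + 1) * α) / δ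
              ≤ 16 * Real.exp 4 * (((n:ℝ)+1) * a) / δ := by
                apply (div_le_div_iff_of_pos_right hδ0).2
                exact mul_le_mul_of_nonneg_left (hb i).2.2 (by positivity)
            _ = 16 * Real.exp 4 * ((n:ℝ)+1) / δ * a := by ring
      _ = ENNReal.ofReal (Kδ * a) ^ n := by
          rw [Finset.prod_const, Finset.card_univ, Fintype.card_fin]
      _ = ENNReal.ofReal ((Kδ * a) ^ n) := by
          rw [← ENNReal.ofReal_pow (mul_nonneg hKδ0.le ha0.le)]
  -- Lower bound: positivity
  set c₀ : ℝ := (1-δ)/n with hc₀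
  have hn0 : (0:ℝ) < n := by exact_mod_cast hn
  have hc₀0 : 0 < c₀ := div_pos (by linarith) hn0
  have hc₀1 : c₀ < 1 := by
    rw [hc₀, div_lt_one hn0]
    have : (1:ℝ) ≤ (n:ℝ) := by exact_mod_cast hn
    linarith
  have hsub2 : (Set.pi univ fun _ : Fin n => Ioo (0:ℝ) c₀) ⊆ E := by
    intro x hx
    rw [hE, Set.mem_setOf_eq]
    calc δ = 1 + (n:ℝ) * (-c₀) := by rw [hc₀]; field_simp; ring
      _ ≤ (1 + (-c₀)) ^ n := one_add_mul_le_pow (by linarith) n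
      _ = ∏ _i : Fin n, (1 - c₀) := by
          rw [Finset.prod_const, Finset.card_univ, Fintype.card_fin]; ring_nf
      _ ≤ ∏ i : Fin n, (1 - x i) := by
          apply Finset.prod_le_prod (fun i _ => by linarith)
          intro i _
          have := (hx i (Set.mem_univ i)).2
          linarith
  have hlow : 0 < Measure.pi μ E := by
    refine lt_of_lt_of_le ?_ (measure_mono hsub2)
    rw [Measure.pi_pi]
    apply CanonicallyOrderedAdd.prod_pos.2
    intro i _
    rw [hμ]
    exact beta_lower hα0 hα1 (hb i).1 (hb i).2.1 hc₀0 hc₀1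
  have hne_top : Measure.pi μ E ≠ ⊤ := (lt_of_le_of_lt hupper ENNReal.ofReal_lt_top).ne
  constructor
  · exact ENNReal.toReal_pos hlow.ne' hne_top
  · exact ENNReal.toReal_le_of_le_ofReal (pow_nonneg (mul_nonneg hKδ0.le ha0.le) n) hupper

/-- For fixed `n ≥ 1` and `δ ∈ (0,1)`,
`limsup b(α,θ) log P(∏_{i=1}^n (1-U_i) ≥ δ) ≤ -n` as `a(α,θ) → 0` over pairs `(α,θ)` with
`α ∈ (0,1)` and `θ + α > 0`, where `U_1, …, U_n` are independent, `U_i ~ Beta(1-α, θ+iα)`. -/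
theorem limsup_log_prob_prod_ge_le (n : ℕ) (hn : 1 ≤ n) (δ : ℝ) (hδ : δ ∈ Set.Ioo (0:ℝ) 1) :
    Filter.limsup
      (fun p : ℝ × ℝ =>
        ((bParam p.1 p.2 * Real.log (prodTailProb p.1 p.2 n δ) : ℝ) : EReal))
      smallParamFilter ≤ (-(n : ℝ) : EReal) := by
  obtain ⟨hδ0, hδ1⟩ := hδ
  set K : ℝ := 16 * Real.exp 4 * ((n:ℝ)+1) / δ with hKdef
  have hK0 : 0 < K := by have := Real.exp_pos (4:ℝ); positivity
  set ε₀ : ℝ := min (1/2) (1/(((n:ℝ)+1)*2)) with hε₀def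
  have hε₀0 : 0 < ε₀ := lt_min (by norm_num) (by positivity)
  have hev : ∀ᶠ p : ℝ × ℝ in smallParamFilter,
      bParam p.1 p.2 * Real.log (prodTailProb p.1 p.2 n δ)
        ≤ (n:ℝ) * Real.log K * bParam p.1 p.2 - n := by
    have hIoo : Set.Ioo (0:ℝ) ε₀ ∈ nhdsWithin 0 (Set.Ioi 0) :=
      Ioo_mem_nhdsGT hε₀0
    simp only [smallParamFilter, eventually_inf_principal]
    filter_upwards [Filter.preimage_mem_comap hIoo] with p hpa hps
    obtain ⟨⟨hα0, hα1⟩, hθα⟩ := hps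
    obtain ⟨ha0, haε⟩ := hpa
    have hαa : p.1 ≤ aParam p.1 p.2 := le_max_left _ _
    have hα2 : p.1 ≤ 1/2 := le_trans hαa (le_trans haε.le (min_le_left _ _))
    have hsmall : ((n:ℝ)+1) * aParam p.1 p.2 ≤ 1 := by
      have h2 : aParam p.1 p.2 ≤ 1/(((n:ℝ)+1)*2) := le_trans haε.le (min_le_right _ _)
      have hn1 : (0:ℝ) < (n:ℝ)+1 := by positivity
      rw [le_div_iff₀ (by positivity)] at h2
      nlinarith
    obtain ⟨hPpos, hPle⟩ := prodTailProb_bounds n hn hδ0 hδ1 hα0 hα1 hα2 hθα hsmall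
    have ha1 : aParam p.1 p.2 < 1 :=
      lt_of_lt_of_le haε (le_trans (min_le_left _ _) (by norm_num))
    have hloga : Real.log (aParam p.1 p.2) < 0 := Real.log_neg ha0 ha1
    have hbp0 : 0 < bParam p.1 p.2 := by
      rw [bParam]; exact inv_pos.2 (by linarith)
    have hlogP : Real.log (prodTailProb p.1 p.2 n δ)
        ≤ (n:ℝ) * (Real.log K + Real.log (aParam p.1 p.2)) := by
      calc Real.log (prodTailProb p.1 p.2 n δ)
          ≤ Real.log ((K * aParam p.1 p.2) ^ n) := by
            apply Real.log_le_log hPpos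
            rw [hKdef]
            convert hPle using 2
        _ = n * Real.log (K * aParam p.1 p.2) := by rw [Real.log_pow]
        _ = n * (Real.log K + Real.log (aParam p.1 p.2)) := by
            rw [Real.log_mul hK0.ne' ha0.ne']
    calc bParam p.1 p.2 * Real.log (prodTailProb p.1 p.2 n δ)
        ≤ bParam p.1 p.2 * ((n:ℝ) * (Real.log K + Real.log (aParam p.1 p.2))) :=
          mul_le_mul_of_nonneg_left hlogP hbp0.le
      _ = (n:ℝ) * Real.log K * bParam p.1 p.2
            + (n:ℝ) * (Real.log (aParam p.1 p.2) * bParam p.1 p.2) := by ring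
      _ = (n:ℝ) * Real.log K * bParam p.1 p.2 - n := by
          have hm1 : Real.log (aParam p.1 p.2) * bParam p.1 p.2 = -1 := by
            rw [bParam]
            have hne : Real.log (aParam p.1 p.2) ≠ 0 := ne_of_lt hloga
            field_simp
          rw [hm1]; ring
  have hle : Filter.limsup
      (fun p : ℝ × ℝ =>
        ((bParam p.1 p.2 * Real.log (prodTailProb p.1 p.2 n δ) : ℝ) : EReal))
      smallParamFilter ≤ Filter.limsup
      (fun p : ℝ × ℝ =>
        (((n:ℝ) * Real.log K * bParam p.1 p.2 - n : ℝ) : EReal)) smallParamFilter := by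
    apply Filter.limsup_le_limsup ?_ Filter.isCobounded_le_of_bot Filter.isBounded_le_of_top
    filter_upwards [hev] with p hp
    exact EReal.coe_le_coe_iff.2 hp
  refine le_trans hle ?_
  rcases eq_or_neBot smallParamFilter with hbot | hne
  · rw [hbot]
    simp
  · have h1 : Tendsto (fun p : ℝ × ℝ => aParam p.1 p.2) smallParamFilter
        (nhdsWithin 0 (Set.Ioi 0)) := by
      apply tendsto_comap.mono_left
      simp only [smallParamFilter]
      exact inf_le_left
    have h2 : Tendsto (fun p : ℝ × ℝ => Real.log (aParam p.1 p.2)) smallParamFilter atBot :=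
      Real.tendsto_log_nhdsGT_zero.comp h1
    have h3 : Tendsto (fun p : ℝ × ℝ => -Real.log (aParam p.1 p.2)) smallParamFilter atTop :=
      tendsto_neg_atBot_atTop.comp h2
    have h4 : Tendsto (fun p : ℝ × ℝ => bParam p.1 p.2) smallParamFilter (nhds 0) := by
      have := tendsto_inv_atTop_zero.comp h3
      simpa [bParam, Function.comp_def] using this
    have h5 : Tendsto (fun p : ℝ × ℝ => (n:ℝ) * Real.log K * bParam p.1 p.2 - n)
        smallParamFilter (nhds (-(n:ℝ))) := by
      have := (h4.const_mul ((n:ℝ) * Real.log K)).sub_const (n:ℝ)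
      simpa using this
    have hts' : Tendsto
        (fun p : ℝ × ℝ => (((n:ℝ) * Real.log K * bParam p.1 p.2 - n : ℝ) : EReal))
        smallParamFilter (nhds ((-(n:ℝ) : ℝ) : EReal)) := EReal.tendsto_coe.2 h5
    rw [hts'.limsup_eq]
    simp
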